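/- Let G be a 2-connected graph on r+1 vertices, let F* be an r-uniform hypergraph of girth at least r+2, and let F be a graph on V(F*) obtained by placing inside each hyperedge of F* (a graph on r vertices embedded arbitrarily into the edge), where G is not contained in any r-vertex graph. If G is not contained in any single placed copy, then F is G-free: any copy of G in F would have two vertices in different hyperedges, and a cycle of G through them would yield a hypergraph cycle of length at most r+1 in F*, contradicting the girth condition. -/

import Mathlib

/-- `e, v` form a loose cycle of length `ℓ` in the hypergraph `E`. -/
def IsLooseCycle {V : Type} [DecidableEq V] (E : Finset (Finset V)) (ℓ : ℕ)
    (e : ZMod ℓ → Finset V) (v : ZMod ℓ → V) : Prop :=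
  Function.Injective e ∧ Function.Injective v ∧ (∀ i, e i ∈ E) ∧
    (∀ i, e i ∩ e (i + 1) = {v (i + 1)}) ∧
    (∀ i j, j ≠ i → j ≠ i + 1 → i ≠ j + 1 → e i ∩ e j = ∅)

private lemma zmod_const {β : Type} {k : ℕ} (hk : k ≠ 0) (f : ZMod k → β)
    (h : ∀ i, f i = f (i + 1)) (i j : ZMod k) : f i = f j := by
  haveI : NeZero k := ⟨hk⟩
  have h0 : ∀ n : ℕ, f (n : ZMod k) = f 0 := by
    intro n
    induction n with
    | zero => simp
    | succ n ih => rw [Nat.cast_succ, ← h, ih]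
  have hall : ∀ i : ZMod k, f i = f 0 := fun i => by
    rw [← ZMod.natCast_rightInverse i, h0]
  rw [hall i, hall j]

private lemma zmod_val_add_one {k : ℕ} (hk : 2 ≤ k) (t : ZMod k) :
    (t + 1).val = if t.val = k - 1 then 0 else t.val + 1 := by
  haveI : NeZero k := ⟨by omega⟩
  haveI : Fact (1 < k) := ⟨by omega⟩
  have h1 : (1 : ZMod k).val = 1 := ZMod.val_one k
  have ht : t.val < k := ZMod.val_lt t
  rw [ZMod.val_add, h1]
  split
  · next h =>
      have hk1 : t.val + 1 = k := by omega
      rw [hk1, Nat.mod_self]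
  · next h => exact Nat.mod_eq_of_lt (by omega)

private lemma key_lemma {V : Type} [DecidableEq V] (r : ℕ) (hr : 2 ≤ r)
    (E : Finset (Finset V))
    (hunif : ∀ e ∈ E, e.card = r)
    (hlin : ∀ e ∈ E, ∀ f ∈ E, e ≠ f → (e ∩ f).card ≤ 1)
    (hgirth : ∀ ℓ : ℕ, 3 ≤ ℓ → ℓ ≤ r + 1 →
      ¬ ∃ (e : ZMod ℓ → Finset V) (v : ZMod ℓ → V), IsLooseCycle E ℓ e v) :
    ∀ k : ℕ, 2 ≤ k → k ≤ r + 1 → ∀ (e : ZMod k → Finset V) (v : ZMod k → V),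
      (∀ i, e i ∈ E) → Function.Injective v →
      (∀ i, v (i + 1) ∈ e i ∧ v (i + 1) ∈ e (i + 1)) →
      (∃ i, e i ≠ e (i + 1)) → False := by
  intro k
  induction k using Nat.strong_induction_on with
  | _ k ih =>
  intro hk2 hkr e v he hv htr hne
  haveI : NeZero k := ⟨by omega⟩
  haveI : Fact (1 < k) := ⟨by omega⟩
  have castinj : ∀ a b : ℕ, a < k → b < k → (a : ZMod k) = (b : ZMod k) → a = b := by
    intro a b ha hb hab
    have := congrArg ZMod.val hab
    rwa [ZMod.val_cast_of_lt ha, ZMod.val_cast_of_lt hb] at this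
  have castval : ∀ j : ZMod k, ((j.val : ℕ) : ZMod k) = j := fun j =>
    ZMod.natCast_rightInverse j
  rcases eq_or_lt_of_le hk2 with hk2' | hk3
  · -- base case k = 2
    subst hk2'
    obtain ⟨i, hi⟩ := hne
    have h10 : (1 + 1 : ZMod 2) = 0 := by decide
    have h01 : e 0 ≠ e 1 := by
      have hiv : i = 0 ∨ i = 1 := by
        have := ZMod.val_lt i
        have h0 : i.val = 0 ∨ i.val = 1 := by omega
        rcases h0 with h0 | h0
        · left; exact (ZMod.val_injective 2) (by simpa using h0)
        · right; exact (ZMod.val_injective 2) (by rw [h0]; decide)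
      rcases hiv with rfl | rfl
      · simpa using hi
      · rw [h10] at hi; exact fun h => hi h.symm
    have hA := htr 0
    have hB := htr 1
    rw [h10] at hB
    rw [(by decide : (0 + 1 : ZMod 2) = 1)] at hA
    have hvne : v 0 ≠ v 1 := fun h => (by decide : (0 : ZMod 2) ≠ 1) (hv h)
    have hcard : 1 < (e 0 ∩ e 1).card := by
      apply Finset.one_lt_card.mpr
      exact ⟨v 0, Finset.mem_inter.mpr ⟨hB.2, hB.1⟩, v 1,
        Finset.mem_inter.mpr ⟨hA.1, hA.2⟩, hvne⟩
    have := hlin _ (he 0) _ (he 1) h01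
    omega
  · -- k ≥ 3
    have castsub1 : ((k - 1 : ℕ) : ZMod k) = -1 := by
      have h2 : ((k - 1 : ℕ) : ZMod k) + 1 = ((k - 1 + 1 : ℕ) : ZMod k) := by
        push_cast; ring
      have h3 : (k - 1 + 1 : ℕ) = k := by omega
      rw [h3, ZMod.natCast_self] at h2
      linear_combination h2
    by_cases hadj : ∃ i, e i = e (i + 1)
    · -- merge two consecutive equal edges
      obtain ⟨i, hei⟩ := hadj
      set m := k - 1 with hm
      haveI : NeZero m := ⟨by omega⟩
      have hmlt : ∀ t : ZMod m, t.val < m := fun t => ZMod.val_lt t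
      obtain ⟨ι, hι⟩ : ∃ ι : ZMod m → ZMod k, ∀ t, ι t = i + 1 + ((t.val : ℕ) : ZMod k) :=
        ⟨_, fun _ => rfl⟩
      obtain ⟨e', he'⟩ : ∃ e' : ZMod m → Finset V, ∀ t, e' t = e (ι t) := ⟨_, fun _ => rfl⟩
      obtain ⟨v', hv'⟩ : ∃ v' : ZMod m → V,
          ∀ t, v' t = if t = 0 then v i else v (ι t) := ⟨_, fun _ => rfl⟩
      have ιinj : Function.Injective ι := by
        intro t s hts
        rw [hι t, hι s] at hts
        have h2 : ((t.val : ℕ) : ZMod k) = ((s.val : ℕ) : ZMod k) := add_left_cancel hts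
        exact (ZMod.val_injective m) (castinj _ _ (by have := hmlt t; omega)
          (by have := hmlt s; omega) h2)
      have hι0 : ι 0 = i + 1 := by rw [hι]; simp
      have hιsucc : ∀ t : ZMod m, t.val ≠ m - 1 → ι (t + 1) = ι t + 1 := by
        intro t ht
        have hv1 : (t + 1).val = t.val + 1 := by
          rw [zmod_val_add_one (by omega) t, if_neg ht]
        rw [hι, hι, hv1]
        push_cast
        ring
      have hιlast : ∀ t : ZMod m, t.val = m - 1 → ι t = i - 1 ∧ t + 1 = 0 := by
        intro t ht
        constructor
        · have hc : ((t.val : ℕ) : ZMod k) = -2 := by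
            rw [ht]
            have h3 : ((m - 1 : ℕ) : ZMod k) + 2 = (((m - 1) + 2 : ℕ) : ZMod k) := by
              push_cast; ring
            have h2 : (((m - 1) + 2 : ℕ) : ZMod k) = ((k : ℕ) : ZMod k) := by
              congr 1; omega
            rw [ZMod.natCast_self] at h2
            have h4 := h3.trans h2
            linear_combination h4
          rw [hι, hc]; ring
        · have h5 : (t + 1).val = 0 := by
            rw [zmod_val_add_one (by omega) t, if_pos ht]
          exact (ZMod.val_eq_zero _).mp h5
      apply ih m (by omega) (by omega) (by omega) e' v' (fun t => by rw [he']; exact he _)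
      · -- injectivity of v'
        intro t s hts
        rw [hv' t, hv' s] at hts
        by_cases ht0 : t = 0 <;> by_cases hs0 : s = 0
        · rw [ht0, hs0]
        · exfalso
          rw [if_pos ht0, if_neg hs0] at hts
          have h6 := hv hts
          rw [hι] at h6
          have h2 : ((0 : ℕ) : ZMod k) = ((1 + s.val : ℕ) : ZMod k) := by
            push_cast
            have h7 : i + 0 = i + (1 + ((s.val : ℕ) : ZMod k)) := by
              linear_combination h6
            exact add_left_cancel h7
          have hs1 : s.val ≠ 0 := fun h => hs0 ((ZMod.val_eq_zero s).mp h)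
          have := castinj _ _ (by omega) (by have := hmlt s; omega) h2
          omega
        · exfalso
          rw [if_neg ht0, if_pos hs0] at hts
          have h6 := hv hts
          rw [hι] at h6
          have h2 : ((0 : ℕ) : ZMod k) = ((1 + t.val : ℕ) : ZMod k) := by
            push_cast
            have h7 : i + 0 = i + (1 + ((t.val : ℕ) : ZMod k)) := by
              linear_combination -h6
            exact add_left_cancel h7
          have ht1 : t.val ≠ 0 := fun h => ht0 ((ZMod.val_eq_zero t).mp h)
          have := castinj _ _ (by omega) (by have := hmlt t; omega) h2
          omega
        · rw [if_neg ht0, if_neg hs0] at hts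
          exact ιinj (hv hts)
      · -- transition property
        intro t
        by_cases hlast : t.val = m - 1
        · obtain ⟨hιt, ht1⟩ := hιlast t hlast
          rw [ht1, hv' 0, if_pos rfl]
          have hA := htr (i - 1)
          rw [sub_add_cancel] at hA
          constructor
          · rw [he', hιt]; exact hA.1
          · rw [he' 0, hι0, ← hei]; exact hA.2
        · have ht1 : t + 1 ≠ 0 := by
            intro h
            have h8 := congrArg ZMod.val h
            rw [zmod_val_add_one (by omega) t, if_neg hlast] at h8
            simp at h8
          rw [hv' (t + 1), if_neg ht1, hιsucc t hlast]
          have hA := htr (ι t)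
          exact ⟨by rw [he']; exact hA.1, by rw [he', hιsucc t hlast]; exact hA.2⟩
      · -- not all edges equal
        by_contra hcon
        push_neg at hcon
        have hconst : ∀ t s : ZMod m, e' t = e' s :=
          zmod_const (by omega) e' (fun t => (hcon t))
        have hc : ∀ j : ZMod k, e j = e (i + 1) := by
          intro j
          by_cases hj : j = i
          · rw [hj]; exact hei
          · set s : ℕ := (j - (i + 1)).val with hs
            have hslt : s < k := ZMod.val_lt _
            have hsm : s < m := by
              rcases Nat.lt_or_ge s m with h | h
              · exact h
              · exfalso
                have hs1 : s = k - 1 := by omega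
                have h9 : j - (i + 1) = ((k - 1 : ℕ) : ZMod k) := by
                  rw [← castval (j - (i+1)), ← hs, hs1]
                rw [castsub1] at h9
                apply hj
                linear_combination h9
            have hιs : ι ((s : ℕ) : ZMod m) = j := by
              rw [hι, ZMod.val_cast_of_lt hsm, hs, castval]
              ring
            have h10 := hconst ((s : ℕ) : ZMod m) 0
            rw [he', he', hιs, hι0] at h10
            exact h10
        obtain ⟨i₀, hi₀⟩ := hne
        exact hi₀ ((hc i₀).trans (hc (i₀ + 1)).symm)
    · -- no two consecutive edges equal
      push_neg at hadj
      classical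
      have hone : (1 : ZMod k) ≠ 0 := by
        intro h
        have h2 := congrArg ZMod.val h
        rw [ZMod.val_one k, ZMod.val_zero] at h2
        exact one_ne_zero h2
      have adjsing : ∀ i : ZMod k, e i ∩ e (i + 1) = {v (i + 1)} := by
        intro i
        have hcard := hlin _ (he i) _ (he (i + 1)) (hadj i)
        have hmem : v (i + 1) ∈ e i ∩ e (i + 1) :=
          Finset.mem_inter.mpr ⟨(htr i).1, (htr i).2⟩
        apply Finset.eq_singleton_iff_unique_mem.mpr
        exact ⟨hmem, fun x hx => Finset.card_le_one.mp hcard x hx _ hmem⟩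
      set P : ℕ → Prop := fun d => 2 ≤ d ∧ d ≤ k - 2 ∧
        ∃ i : ZMod k, (e i ∩ e (i + ((d : ℕ) : ZMod k))).Nonempty with hP
      by_cases hPex : ∃ d, P d
      · -- shorten the cycle
        have hspec := Nat.find_spec hPex
        set d₀ := Nat.find hPex with hd₀
        have hmin : ∀ d, d < d₀ → ¬ P d := fun d hd => Nat.find_min hPex hd
        rw [hP] at hspec
        obtain ⟨hd2, hdk2, i, hxne⟩ := hspec
        obtain ⟨x, hx⟩ := hxne
        rw [Finset.mem_inter] at hx
        set m := d₀ + 1 with hmdef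
        haveI : NeZero m := ⟨by omega⟩
        have hmlt : ∀ t : ZMod m, t.val < m := fun t => ZMod.val_lt t
        obtain ⟨ι, hι⟩ : ∃ ι : ZMod m → ZMod k, ∀ t, ι t = i + ((t.val : ℕ) : ZMod k) :=
          ⟨_, fun _ => rfl⟩
        obtain ⟨e', he'⟩ : ∃ e' : ZMod m → Finset V, ∀ t, e' t = e (ι t) := ⟨_, fun _ => rfl⟩
        obtain ⟨v', hv'⟩ : ∃ v' : ZMod m → V,
            ∀ t, v' t = if t = 0 then x else v (ι t) := ⟨_, fun _ => rfl⟩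
        have ιinj : Function.Injective ι := by
          intro t s hts
          rw [hι t, hι s] at hts
          have h2 : ((t.val : ℕ) : ZMod k) = ((s.val : ℕ) : ZMod k) := add_left_cancel hts
          exact (ZMod.val_injective m) (castinj _ _ (by have := hmlt t; omega)
            (by have := hmlt s; omega) h2)
        have hι0 : ι 0 = i := by rw [hι]; simp
        have hιsucc : ∀ t : ZMod m, t.val ≠ m - 1 → ι (t + 1) = ι t + 1 := by
          intro t ht
          have hv1 : (t + 1).val = t.val + 1 := by
            rw [zmod_val_add_one (by omega) t, if_neg ht]
          rw [hι, hι, hv1]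
          push_cast
          ring
        have hsucc0 : ∀ t : ZMod m, t.val = m - 1 → t + 1 = 0 := by
          intro t ht
          have h5 : (t + 1).val = 0 := by
            rw [zmod_val_add_one (by omega) t, if_pos ht]
          exact (ZMod.val_eq_zero _).mp h5
        -- the closing vertex x is distinct from the path vertices
        have hxnotv : ∀ a : ℕ, 1 ≤ a → a ≤ d₀ → x ≠ v (i + ((a : ℕ) : ZMod k)) := by
          intro a ha1 ha2 heq
          have hc1 : (a - 1 + 1 : ℕ) = a := by omega
          have hcast : ((a - 1 : ℕ) : ZMod k) + 1 = ((a : ℕ) : ZMod k) := by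
            conv_rhs => rw [← hc1]
            push_cast
            ring
          have hidx : i + ((a - 1 : ℕ) : ZMod k) + 1 = i + ((a : ℕ) : ZMod k) := by
            rw [add_assoc, hcast]
          have hA := htr (i + ((a - 1 : ℕ) : ZMod k))
          rw [hidx, ← heq] at hA
          by_cases hB : a = 1
          · by_cases hd3 : d₀ = 2
            · -- a = 1, d₀ = 2
              rw [hB, Nat.cast_one] at heq
              have c2 : ((d₀ : ℕ) : ZMod k) = 1 + 1 := by
                rw [hd3]
                push_cast
                ring
              have hx2 : x ∈ e (i + 1 + 1) := by
                have := hx.2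
                rw [c2, ← add_assoc] at this
                exact this
              have hmem2 : x ∈ e (i + 1) ∩ e (i + 1 + 1) :=
                Finset.mem_inter.mpr ⟨heq ▸ (htr i).2, hx2⟩
              rw [adjsing (i + 1)] at hmem2
              have h6 := Finset.mem_singleton.mp hmem2
              have h7 := hv (heq.symm.trans h6)
              have : (1 : ZMod k) = 0 := by linear_combination -h7
              exact hone this
            · -- a = 1, d₀ ≥ 3
              apply hmin (d₀ - 1) (by omega)
              rw [hP]
              refine ⟨by omega, by omega, i + 1, x, ?_⟩
              rw [Finset.mem_inter]
              constructor
              · rw [hB, Nat.cast_one] at heq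
                rw [heq]
                exact (htr i).2
              · have hcd : ((d₀ - 1 : ℕ) : ZMod k) + 1 = ((d₀ : ℕ) : ZMod k) := by
                  have h8 : (d₀ - 1 + 1 : ℕ) = d₀ := by omega
                  conv_rhs => rw [← h8]
                  push_cast
                  ring
                have h9 : i + 1 + ((d₀ - 1 : ℕ) : ZMod k) = i + ((d₀ : ℕ) : ZMod k) := by
                  rw [← hcd]
                  ring
                rw [h9]
                exact hx.2
          · by_cases hC : a = d₀
            · by_cases hd3 : d₀ = 2
              · -- a = d₀ = 2
                have ha12 : a - 1 = 1 := by omega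
                have hx1 : x ∈ e (i + 1) := by
                  have := hA.1
                  rw [ha12, Nat.cast_one] at this
                  exact this
                have hmem2 : x ∈ e i ∩ e (i + 1) := Finset.mem_inter.mpr ⟨hx.1, hx1⟩
                rw [adjsing i] at hmem2
                have h6 := Finset.mem_singleton.mp hmem2
                have c2 : ((a : ℕ) : ZMod k) = 1 + 1 := by
                  have : a = 2 := by omega
                  rw [this]
                  push_cast
                  ring
                rw [c2] at heq
                have h7 := hv (heq.symm.trans h6)
                have : (1 : ZMod k) = 0 := by linear_combination h7
                exact hone this
              · -- a = d₀ ≥ 3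
                apply hmin (d₀ - 1) (by omega)
                rw [hP]
                refine ⟨by omega, by omega, i, x, ?_⟩
                rw [Finset.mem_inter]
                refine ⟨hx.1, ?_⟩
                have h8 : ((d₀ - 1 : ℕ) : ZMod k) = ((a - 1 : ℕ) : ZMod k) := by
                  rw [hC]
                rw [h8]
                exact hA.1
            · -- 2 ≤ a ≤ d₀ - 1
              apply hmin a (by omega)
              rw [hP]
              exact ⟨by omega, by omega, i, x, Finset.mem_inter.mpr ⟨hx.1, hA.2⟩⟩
        apply ih m (by omega) (by omega) (by omega) e' v'
          (fun t => by rw [he']; exact he _)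
        · -- injectivity of v'
          intro t s hts
          rw [hv' t, hv' s] at hts
          by_cases ht0 : t = 0 <;> by_cases hs0 : s = 0
          · rw [ht0, hs0]
          · exfalso
            rw [if_pos ht0, if_neg hs0, hι] at hts
            have hs1 : s.val ≠ 0 := fun h => hs0 ((ZMod.val_eq_zero s).mp h)
            exact hxnotv s.val (by omega) (by have := hmlt s; omega) hts
          · exfalso
            rw [if_neg ht0, if_pos hs0, hι] at hts
            have ht1 : t.val ≠ 0 := fun h => ht0 ((ZMod.val_eq_zero t).mp h)
            exact hxnotv t.val (by omega) (by have := hmlt t; omega) hts.symm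
          · rw [if_neg ht0, if_neg hs0] at hts
            exact ιinj (hv hts)
        · -- transition property
          intro t
          by_cases hlast : t.val = m - 1
          · rw [hsucc0 t hlast, hv' 0, if_pos rfl]
            constructor
            · rw [he', hι, hlast]
              have h11 : (m - 1 : ℕ) = d₀ := by omega
              rw [h11]
              exact hx.2
            · rw [he' 0, hι0]
              exact hx.1
          · have ht1 : t + 1 ≠ 0 := by
              intro h
              have h8 := congrArg ZMod.val h
              rw [zmod_val_add_one (by omega) t, if_neg hlast] at h8
              simp at h8
            rw [hv' (t + 1), if_neg ht1, hιsucc t hlast]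
            have hA := htr (ι t)
            exact ⟨by rw [he']; exact hA.1, by rw [he', hιsucc t hlast]; exact hA.2⟩
        · -- not all edges equal
          refine ⟨0, ?_⟩
          have h12 : ι (0 + 1) = ι 0 + 1 := hιsucc 0 (by rw [ZMod.val_zero]; omega)
          rw [he' 0, he' (0 + 1), h12, hι0]
          exact hadj i
      · -- no defect : we have an actual loose cycle
        have hPall : ∀ d, ¬ P d := fun d hd => hPex ⟨d, hd⟩
        have far : ∀ i j : ZMod k, j ≠ i → j ≠ i + 1 → i ≠ j + 1 → e i ∩ e j = ∅ := by
          intro i j h1 h2 h3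
          set d : ℕ := (j - i).val with hd
          have hdlt : d < k := ZMod.val_lt _
          have hdj : ((d : ℕ) : ZMod k) = j - i := by rw [hd, castval]
          have hd0 : d ≠ 0 := by
            intro h
            apply h1
            have h5 : j - i = 0 := by rw [← hdj, h]; simp
            linear_combination h5
          have hd1 : d ≠ 1 := by
            intro h
            apply h2
            have h5 : j - i = 1 := by rw [← hdj, h]; simp
            linear_combination h5
          have hdk1 : d ≠ k - 1 := by
            intro h
            apply h3
            have h5 : j - i = ((k - 1 : ℕ) : ZMod k) := by rw [← hdj, h]
            rw [castsub1] at h5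
            linear_combination -h5
          by_contra hcon
          have hnonempty : (e i ∩ e j).Nonempty := Finset.nonempty_iff_ne_empty.mpr hcon
          apply hPall d
          rw [hP]
          refine ⟨by omega, by omega, i, ?_⟩
          rw [hdj]
          have h6 : i + (j - i) = j := by ring
          rw [h6]
          exact hnonempty
        have einj : Function.Injective e := by
          intro i j hij
          by_contra hne2
          have hji : j ≠ i := fun h => hne2 h.symm
          by_cases h2 : j = i + 1
          · exact hadj i (by rw [← h2]; exact hij)
          · by_cases h3 : i = j + 1
            · exact hadj j (by rw [← h3]; exact hij.symm)
            · have hfar := far i j hji h2 h3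
              have hnon : (e i).Nonempty := by
                rw [← Finset.card_pos, hunif _ (he i)]
                omega
              obtain ⟨y, hy⟩ := hnon
              have hmem : y ∈ e i ∩ e j := Finset.mem_inter.mpr ⟨hy, hij ▸ hy⟩
              rw [hfar] at hmem
              exact absurd hmem (Finset.notMem_empty y)
        exact hgirth k (by omega) hkr ⟨e, v, einj, hv, he, adjsing, far⟩

private lemma walk_support_eq {α : Type} {G : SimpleGraph α} {u v : α} (p : G.Walk u v) :
    p.support = (List.range (p.length + 1)).map p.getVert := by
  induction p with
  | nil => rfl
  | cons h q ihq =>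
    rw [SimpleGraph.Walk.support_cons, SimpleGraph.Walk.length_cons, List.range_succ_eq_map,
      List.map_cons, List.map_map, ihq]
    rfl

theorem stmt19 {α V : Type} [Fintype α] [DecidableEq V] (r : ℕ) (hr : 2 ≤ r)
    (G : SimpleGraph α) (hcard : Fintype.card α = r + 1)
    (h2conn : ∀ x y : α, x ≠ y → ∃ (z : α) (w : G.Walk z z),
      w.IsCycle ∧ x ∈ w.support ∧ y ∈ w.support)
    (E : Finset (Finset V)) (hunif : ∀ e ∈ E, e.card = r)
    (hlin : ∀ e ∈ E, ∀ f ∈ E, e ≠ f → (e ∩ f).card ≤ 1)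
    (hgirth : ∀ ℓ : ℕ, 3 ≤ ℓ → ℓ ≤ r + 1 →
      ¬ ∃ (e : ZMod ℓ → Finset V) (v : ZMod ℓ → V), IsLooseCycle E ℓ e v)
    (F : SimpleGraph V)
    (hF : ∀ x y, F.Adj x y → ∃ e ∈ E, x ∈ e ∧ y ∈ e) :
    ¬ ∃ φ : G →g F, Function.Injective φ := by
  rintro ⟨φ, hφ⟩
  classical
  -- Step 1: there are two vertices whose images share no hyperedge
  have hpair : ∃ p q : α, p ≠ q ∧ ∀ f ∈ E, ¬(φ p ∈ f ∧ φ q ∈ f) := by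
    by_contra hcon
    push_neg at hcon
    haveI : Nonempty α := by
      rw [← Fintype.card_pos_iff]; omega
    obtain ⟨a⟩ := ‹Nonempty α›
    have hchoice : ∀ x : α, ∃ f : Finset V, x ≠ a → f ∈ E ∧ φ a ∈ f ∧ φ x ∈ f := by
      intro x
      by_cases hx : x = a
      · exact ⟨∅, fun h => absurd hx h⟩
      · obtain ⟨f, hfE, hfa, hfx⟩ := hcon a x (fun h => hx h.symm)
        exact ⟨f, fun _ => ⟨hfE, hfa, hfx⟩⟩
    choose f hf using hchoice
    have hnotall : ∃ x y : α, x ≠ a ∧ y ≠ a ∧ f x ≠ f y := by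
      by_contra hall
      push_neg at hall
      have hx0 : ∃ x0 : α, x0 ≠ a := by
        haveI : Nontrivial α := Fintype.one_lt_card_iff_nontrivial.mp (by omega)
        exact exists_ne a
      obtain ⟨x0, hx0⟩ := hx0
      have hsub : Finset.univ.image φ ⊆ f x0 := by
        intro y hy
        rw [Finset.mem_image] at hy
        obtain ⟨x, _, rfl⟩ := hy
        by_cases hxa : x = a
        · rw [hxa]; exact (hf x0 hx0).2.1
        · have h1 := (hf x hxa).2.2
          rw [hall x x0 hxa hx0] at h1
          exact h1
      have hcard2 := Finset.card_le_card hsub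
      rw [Finset.card_image_of_injective _ hφ, Finset.card_univ, hcard] at hcard2
      rw [hunif _ (hf x0 hx0).1] at hcard2
      omega
    obtain ⟨xx, yy, hxa, hya, hfxy⟩ := hnotall
    have hxy : xx ≠ yy := fun h => hfxy (h ▸ rfl)
    obtain ⟨g, hgE, hgx, hgy⟩ := hcon xx yy hxy
    have haxx : a ≠ xx := fun h => hxa h.symm
    have hayy : a ≠ yy := fun h => hya h.symm
    have hgfx : g ≠ f xx := by
      intro h
      have h1 : φ yy ∈ f xx := h ▸ hgy
      have hc := hlin _ (hf xx hxa).1 _ (hf yy hya).1 hfxy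
      have h2 : 1 < (f xx ∩ f yy).card := Finset.one_lt_card.mpr
        ⟨φ a, Finset.mem_inter.mpr ⟨(hf xx hxa).2.1, (hf yy hya).2.1⟩,
         φ yy, Finset.mem_inter.mpr ⟨h1, (hf yy hya).2.2⟩,
         fun hh => hayy (hφ hh)⟩
      omega
    have hgfy : g ≠ f yy := by
      intro h
      have h1 : φ xx ∈ f yy := h ▸ hgx
      have hc := hlin _ (hf xx hxa).1 _ (hf yy hya).1 hfxy
      have h2 : 1 < (f xx ∩ f yy).card := Finset.one_lt_card.mpr
        ⟨φ a, Finset.mem_inter.mpr ⟨(hf xx hxa).2.1, (hf yy hya).2.1⟩,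
         φ xx, Finset.mem_inter.mpr ⟨(hf xx hxa).2.2, h1⟩,
         fun hh => haxx (hφ hh)⟩
      omega
    have sing : ∀ s t : Finset V, s ∈ E → t ∈ E → s ≠ t → ∀ z : V, z ∈ s → z ∈ t →
        s ∩ t = {z} := by
      intro s t hs ht hst z hzs hzt
      have hc := hlin _ hs _ ht hst
      have hmem : z ∈ s ∩ t := Finset.mem_inter.mpr ⟨hzs, hzt⟩
      apply Finset.eq_singleton_iff_unique_mem.mpr
      exact ⟨hmem, fun y hy => Finset.card_le_one.mp hc y hy _ hmem⟩
    apply hgirth 3 le_rfl (by omega)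
    obtain ⟨e3, he3⟩ : ∃ e3 : ZMod 3 → Finset V,
        ∀ t, e3 t = if t = 0 then f xx else if t = 1 then g else f yy := ⟨_, fun _ => rfl⟩
    obtain ⟨v3, hv3⟩ : ∃ v3 : ZMod 3 → V,
        ∀ t, v3 t = if t = 0 then φ a else if t = 1 then φ xx else φ yy := ⟨_, fun _ => rfl⟩
    have hZ3 : ∀ t : ZMod 3, t = 0 ∨ t = 1 ∨ t = 2 := by decide
    have he30 : e3 0 = f xx := by rw [he3]; rfl
    have he31 : e3 1 = g := by rw [he3]; rfl
    have he32 : e3 2 = f yy := by rw [he3, if_neg (by decide), if_neg (by decide)]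
    have hv30 : v3 0 = φ a := by rw [hv3]; rfl
    have hv31 : v3 1 = φ xx := by rw [hv3]; rfl
    have hv32 : v3 2 = φ yy := by rw [hv3, if_neg (by decide), if_neg (by decide)]
    refine ⟨e3, v3, ?_, ?_, ?_, ?_, ?_⟩
    · intro t s hts
      rcases hZ3 t with rfl | rfl | rfl <;> rcases hZ3 s with rfl | rfl | rfl
      · rfl
      · rw [he30, he31] at hts; exact absurd hts hgfx.symm
      · rw [he30, he32] at hts; exact absurd hts hfxy
      · rw [he31, he30] at hts; exact absurd hts hgfx
      · rfl
      · rw [he31, he32] at hts; exact absurd hts hgfy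
      · rw [he32, he30] at hts; exact absurd hts hfxy.symm
      · rw [he32, he31] at hts; exact absurd hts hgfy.symm
      · rfl
    · intro t s hts
      rcases hZ3 t with rfl | rfl | rfl <;> rcases hZ3 s with rfl | rfl | rfl
      · rfl
      · rw [hv30, hv31] at hts; exact absurd (hφ hts) haxx
      · rw [hv30, hv32] at hts; exact absurd (hφ hts) hayy
      · rw [hv31, hv30] at hts; exact absurd (hφ hts) haxx.symm
      · rfl
      · rw [hv31, hv32] at hts; exact absurd (hφ hts) hxy
      · rw [hv32, hv30] at hts; exact absurd (hφ hts) hayy.symm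
      · rw [hv32, hv31] at hts; exact absurd (hφ hts) hxy.symm
      · rfl
    · intro i
      rcases hZ3 i with rfl | rfl | rfl
      · rw [he30]; exact (hf xx hxa).1
      · rw [he31]; exact hgE
      · rw [he32]; exact (hf yy hya).1
    · intro i
      rcases hZ3 i with rfl | rfl | rfl
      · rw [(by decide : (0 : ZMod 3) + 1 = 1), he30, he31, hv31]
        exact sing _ _ (hf xx hxa).1 hgE hgfx.symm _ (hf xx hxa).2.2 hgx
      · rw [(by decide : (1 : ZMod 3) + 1 = 2), he31, he32, hv32]
        exact sing _ _ hgE (hf yy hya).1 hgfy _ hgy (hf yy hya).2.2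
      · rw [(by decide : (2 : ZMod 3) + 1 = 0), he32, he30, hv30]
        exact sing _ _ (hf yy hya).1 (hf xx hxa).1 (fun h => hfxy h.symm) _
          (hf yy hya).2.1 (hf xx hxa).2.1
    · intro i j h1 h2 h3
      exfalso
      revert h1 h2 h3
      revert i j
      decide
  -- Step 2: take a cycle through p and q and extract a hypergraph cycle
  obtain ⟨p, q, hpq, hno⟩ := hpair
  obtain ⟨z, w, hw, hpw, hqw⟩ := h2conn p q hpq
  have hk3 : 3 ≤ w.length := hw.three_le_length
  set k := w.length with hkdef
  haveI : NeZero k := ⟨by omega⟩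
  have hsup : w.support = (List.range (k + 1)).map w.getVert := walk_support_eq w
  have htail : w.support.tail = (List.range k).map (fun n => w.getVert (n + 1)) := by
    rw [hsup, List.range_succ_eq_map, List.map_cons, List.tail_cons, List.map_map]
    rfl
  have hnodup := hw.support_nodup
  rw [htail] at hnodup
  have hgetinj : ∀ a b : ℕ, a < k → b < k → w.getVert (a + 1) = w.getVert (b + 1) → a = b := by
    have h1 := (List.nodup_map_iff_inj_on List.nodup_range).mp hnodup
    intro a b ha hb hab
    exact h1 a (List.mem_range.mpr ha) b (List.mem_range.mpr hb) hab
  have hkcard : k ≤ r + 1 := by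
    have h1 := List.Nodup.length_le_card hnodup
    rw [List.length_map, List.length_range, hcard] at h1
    exact h1
  obtain ⟨u, hu⟩ : ∃ u : ZMod k → α, ∀ t, u t = w.getVert (t.val + 1) := ⟨_, fun _ => rfl⟩
  have huinj : Function.Injective u := by
    intro t s hts
    rw [hu, hu] at hts
    exact ZMod.val_injective k (hgetinj _ _ (ZMod.val_lt t) (ZMod.val_lt s) hts)
  have huadj : ∀ t : ZMod k, G.Adj (u t) (u (t + 1)) := by
    intro t
    by_cases hlast : t.val = k - 1
    · have h1 : (t + 1).val = 0 := by rw [zmod_val_add_one (by omega) t, if_pos hlast]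
      rw [hu, hu, h1, hlast]
      have h2 : k - 1 + 1 = k := by omega
      rw [h2]
      have h3 := w.adj_getVert_succ (by omega : 0 < w.length)
      rw [SimpleGraph.Walk.getVert_zero] at h3
      rw [SimpleGraph.Walk.getVert_length]
      exact h3
    · have h1 : (t + 1).val = t.val + 1 := by rw [zmod_val_add_one (by omega) t, if_neg hlast]
      rw [hu, hu, h1]
      exact w.adj_getVert_succ (by have := ZMod.val_lt t; omega)
  have hedge : ∀ t : ZMod k, ∃ g, g ∈ E ∧ φ (u t) ∈ g ∧ φ (u (t + 1)) ∈ g := by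
    intro t
    obtain ⟨g, hgE, h1, h2⟩ := hF _ _ (φ.map_adj (huadj t))
    exact ⟨g, hgE, h1, h2⟩
  choose g hg using hedge
  have hmemidx : ∀ x : α, x ∈ w.support → ∃ t : ZMod k, u t = x := by
    intro x hx
    obtain ⟨n, hn, hnle⟩ := SimpleGraph.Walk.mem_support_iff_exists_getVert.mp hx
    by_cases hn0 : n = 0
    · refine ⟨((k - 1 : ℕ) : ZMod k), ?_⟩
      rw [hu, ZMod.val_cast_of_lt (by omega : k - 1 < k)]
      have h2 : k - 1 + 1 = k := by omega
      rw [h2, SimpleGraph.Walk.getVert_length]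
      rw [hn0, SimpleGraph.Walk.getVert_zero] at hn
      exact hn
    · refine ⟨((n - 1 : ℕ) : ZMod k), ?_⟩
      rw [hu, ZMod.val_cast_of_lt (by omega : n - 1 < k)]
      have h2 : n - 1 + 1 = n := by omega
      rw [h2]
      exact hn
  obtain ⟨tp, htp⟩ := hmemidx p hpw
  obtain ⟨tq, htq⟩ := hmemidx q hqw
  apply key_lemma r hr E hunif hlin hgirth k (by omega) hkcard g (fun t => φ (u t))
    (fun t => (hg t).1) (hφ.comp huinj) (fun t => ⟨(hg t).2.2, (hg (t + 1)).2.1⟩)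
  by_contra hcon
  push_neg at hcon
  have hconst := zmod_const (by omega : k ≠ 0) g hcon
  apply hno (g tp) (hg tp).1
  constructor
  · rw [← htp]; exact (hg tp).2.1
  · rw [← htq]
    have h1 := (hg tq).2.1
    rw [hconst tq tp] at h1
    exact h1
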